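/- (Consistency of the misspecified MLE.) As n → ∞, θ̂_n converges to θ† = θ* + T^{-1}[J] in L² (i.e., E[(θ̂_n − θ†)²] → 0) and hence in probability. -/

import Mathlib

open MeasureTheory ProbabilityTheory Filter

open Real
open scoped NNReal ENNReal

section MLEAux

lemma integrable_pow_gauss {b : ℝ} (hb : 0 < b) (n : ℕ) :
    Integrable (fun x : ℝ => x ^ n * Real.exp (-b * x ^ 2)) := by
  have h := integrable_rpow_mul_exp_neg_mul_sq hb (s := (n : ℝ)) (by
    have : (0:ℝ) ≤ n := Nat.cast_nonneg n
    linarith)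
  simpa [Real.rpow_natCast] using h

lemma tendsto_pow_gauss_atTop {b : ℝ} (hb : 0 < b) (n : ℕ) :
    Tendsto (fun x : ℝ => x ^ n * Real.exp (-b * x ^ 2)) atTop (nhds 0) := by
  have h := rpow_mul_exp_neg_mul_sq_isLittleO_exp_neg hb (n : ℝ)
  simp only [Real.rpow_natCast] at h
  refine h.isBigO.trans_tendsto ?_
  have h2 : Tendsto (fun x : ℝ => -(1/2) * x) atTop atBot :=
    tendsto_id.const_mul_atTop_of_neg (by norm_num)
  exact Real.tendsto_exp_atBot.comp h2

lemma tendsto_pow_gauss_atBot {b : ℝ} (hb : 0 < b) (n : ℕ) :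
    Tendsto (fun x : ℝ => x ^ n * Real.exp (-b * x ^ 2)) atBot (nhds 0) := by
  have h1 : Tendsto (fun x : ℝ => (-x) ^ n * Real.exp (-b * (-x) ^ 2)) atTop (nhds 0) := by
    have := (tendsto_pow_gauss_atTop hb n).const_mul ((-1 : ℝ) ^ n)
    rw [mul_zero] at this
    refine this.congr fun x => ?_
    rw [neg_pow x n]
    ring_nf
  have h2 := h1.comp tendsto_neg_atBot_atTop
  refine h2.congr fun x => ?_
  simp

lemma gauss_ibp {b : ℝ} (hb : 0 < b) (n : ℕ) :
    ∫ x : ℝ, x ^ (n + 2) * Real.exp (-b * x ^ 2)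
      = ((n + 1 : ℝ) / (2 * b)) * ∫ x : ℝ, x ^ n * Real.exp (-b * x ^ 2) := by
  set F : ℝ → ℝ := fun x => x ^ (n + 1) * Real.exp (-b * x ^ 2) with hF
  set F' : ℝ → ℝ := fun x =>
    (n + 1 : ℝ) * (x ^ n * Real.exp (-b * x ^ 2)) - (2 * b) * (x ^ (n + 2) * Real.exp (-b * x ^ 2))
    with hF'
  have hderiv : ∀ x, HasDerivAt F (F' x) x := by
    intro x
    have h1 : HasDerivAt (fun x : ℝ => x ^ (n + 1)) ((n + 1 : ℕ) * x ^ n) x := by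
      simpa using hasDerivAt_pow (n + 1) x
    have h2 : HasDerivAt (fun x : ℝ => Real.exp (-b * x ^ 2))
        (Real.exp (-b * x ^ 2) * (-b * (2 * x))) x := by
      have hx : HasDerivAt (fun x : ℝ => -b * x ^ 2) (-b * (2 * x)) x := by
        simpa using ((hasDerivAt_pow 2 x).const_mul (-b))
      exact hx.exp
    have : HasDerivAt F _ x := h1.mul h2
    convert this using 1
    simp only [hF']
    push_cast
    ring
  have hint : Integrable F' := by
    apply Integrable.sub
    · exact (integrable_pow_gauss hb n).const_mul _
    · exact (integrable_pow_gauss hb (n + 2)).const_mul _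
  have hzero : ∫ x, F' x = 0 := by
    have := MeasureTheory.integral_of_hasDerivAt_of_tendsto hderiv hint
      (tendsto_pow_gauss_atBot hb (n + 1)) (tendsto_pow_gauss_atTop hb (n + 1))
    simpa using this
  have hsplit : ∫ x, F' x
      = (n + 1 : ℝ) * (∫ x : ℝ, x ^ n * Real.exp (-b * x ^ 2))
        - (2 * b) * ∫ x : ℝ, x ^ (n + 2) * Real.exp (-b * x ^ 2) := by
    rw [hF']
    rw [integral_sub ((integrable_pow_gauss hb n).const_mul _)
      ((integrable_pow_gauss hb (n + 2)).const_mul _), integral_const_mul, integral_const_mul]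
  have h2b : (2 * b) ≠ 0 := by positivity
  rw [hsplit] at hzero
  rw [div_mul_eq_mul_div, eq_div_iff h2b]
  linarith [hzero]


lemma gauss_I1 {b : ℝ} (hb : 0 < b) :
    ∫ x : ℝ, x ^ 1 * Real.exp (-b * x ^ 2) = 0 := by
  set F : ℝ → ℝ := fun x => -(2 * b)⁻¹ * Real.exp (-b * x ^ 2) with hF
  have hderiv : ∀ x, HasDerivAt F (x ^ 1 * Real.exp (-b * x ^ 2)) x := by
    intro x
    have h2 : HasDerivAt (fun x : ℝ => Real.exp (-b * x ^ 2))
        (Real.exp (-b * x ^ 2) * (-b * (2 * x))) x := by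
      have hx : HasDerivAt (fun x : ℝ => -b * x ^ 2) (-b * (2 * x)) x := by
        simpa using ((hasDerivAt_pow 2 x).const_mul (-b))
      exact hx.exp
    have : HasDerivAt F _ x := h2.const_mul (-(2 * b)⁻¹)
    convert this using 1
    have hbne : (2 * b) ≠ 0 := by positivity
    field_simp
  have h0 : Tendsto F atBot (nhds 0) := by
    have := (tendsto_pow_gauss_atBot hb 0).const_mul (-(2 * b)⁻¹)
    rw [mul_zero] at this
    refine this.congr fun x => ?_
    simp [hF]
  have h1 : Tendsto F atTop (nhds 0) := by
    have := (tendsto_pow_gauss_atTop hb 0).const_mul (-(2 * b)⁻¹)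
    rw [mul_zero] at this
    refine this.congr fun x => ?_
    simp [hF]
  have := MeasureTheory.integral_of_hasDerivAt_of_tendsto hderiv
    (by simpa using integrable_pow_gauss hb 1) h0 h1
  simpa using this

lemma toNNReal_ne_zero_of_pos {v : ℝ} (hv : 0 < v) : Real.toNNReal v ≠ 0 := by
  simp [Real.toNNReal_eq_zero, not_le, hv]

lemma pdf0_eq {v : ℝ} (hv : 0 < v) (x : ℝ) :
    gaussianPDFReal 0 v.toNNReal x
      = (Real.sqrt (2 * π * v))⁻¹ * Real.exp (-(2 * v)⁻¹ * x ^ 2) := by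
  rw [gaussianPDFReal]
  rw [Real.coe_toNNReal _ hv.le]
  congr 1
  rw [sub_zero]
  congr 1
  have hvne : v ≠ 0 := hv.ne'
  field_simp

lemma integral_gaussianReal_pdf (m : ℝ) {v : ℝ≥0} (hv : v ≠ 0) (f : ℝ → ℝ) :
    ∫ x, f x ∂(gaussianReal m v) = ∫ x, gaussianPDFReal m v x * f x := by
  rw [gaussianReal_of_var_ne_zero m hv]
  have hmeas : Measurable (fun x => (gaussianPDFReal m v x).toNNReal) :=
    (measurable_gaussianPDFReal m v).real_toNNReal
  have hd : gaussianPDF m v = fun x => ((gaussianPDFReal m v x).toNNReal : ENNReal) := rfl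
  rw [hd, integral_withDensity_eq_integral_smul hmeas]
  congr 1 with x
  simp [NNReal.smul_def, Real.coe_toNNReal _ (gaussianPDFReal_nonneg m v x)]

lemma integral_fun_gaussianReal (m : ℝ) {v : ℝ} (hv : 0 < v) (f : ℝ → ℝ) :
    ∫ x, f x ∂(gaussianReal m v.toNNReal)
      = ∫ y, ((Real.sqrt (2 * π * v))⁻¹ * Real.exp (-(2 * v)⁻¹ * y ^ 2)) * f (y + m) := by
  rw [integral_gaussianReal_pdf m (toNNReal_ne_zero_of_pos hv) f]
  have hsub : ∀ x, gaussianPDFReal m v.toNNReal x = gaussianPDFReal 0 v.toNNReal (x - m) := by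
    intro x
    rw [gaussianPDFReal_sub, zero_add]
  simp_rw [hsub]
  have := MeasureTheory.integral_add_right_eq_self
    (μ := (volume : Measure ℝ)) (fun x => gaussianPDFReal 0 v.toNNReal (x - m) * f x) m
  rw [← this]
  congr 1 with y
  rw [add_sub_cancel_right, pdf0_eq hv]

lemma gauss_norm {v : ℝ} (hv : 0 < v) :
    (Real.sqrt (2 * π * v))⁻¹ * ∫ x : ℝ, Real.exp (-(2 * v)⁻¹ * x ^ 2) = 1 := by
  have h := integral_gaussianPDFReal_eq_one 0 (toNNReal_ne_zero_of_pos hv)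
  calc (Real.sqrt (2 * π * v))⁻¹ * ∫ x : ℝ, Real.exp (-(2 * v)⁻¹ * x ^ 2)
      = ∫ x : ℝ, gaussianPDFReal 0 v.toNNReal x := by
        rw [← integral_const_mul]
        congr 1 with x
        rw [pdf0_eq hv]
    _ = 1 := h

lemma integral_sq_gaussianReal (m : ℝ) {v : ℝ} (hv : 0 < v) :
    ∫ x, x ^ 2 ∂(gaussianReal m v.toNNReal) = v + m ^ 2 := by
  have hb : (0:ℝ) < (2*v)⁻¹ := by positivity
  have hI0 := gauss_norm hv
  have hI1 := gauss_I1 hb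
  have hI2 := gauss_ibp hb 0
  have h1 : ((0:ℕ) + 1 : ℝ) / (2 * (2*v)⁻¹) = v := by
    push_cast
    field_simp
    norm_num
  rw [h1] at hI2
  simp only [pow_zero, one_mul] at hI2
  rw [integral_fun_gaussianReal m hv (fun x => x^2)]
  rw [show (fun y : ℝ => ((Real.sqrt (2 * π * v))⁻¹ * Real.exp (-(2 * v)⁻¹ * y ^ 2)) * (y + m)^2)
      = fun y : ℝ => (Real.sqrt (2 * π * v))⁻¹ * (y ^ (0+2) * Real.exp (-(2*v)⁻¹ * y ^ 2))
        + ((2*m*(Real.sqrt (2 * π * v))⁻¹) * (y ^ 1 * Real.exp (-(2*v)⁻¹ * y ^ 2))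
        + (m^2*(Real.sqrt (2 * π * v))⁻¹) * (Real.exp (-(2*v)⁻¹ * y ^ 2)))
      from funext fun y => by ring]
  have ha0 : Integrable (fun y : ℝ =>
      (m^2*(Real.sqrt (2 * π * v))⁻¹) * (Real.exp (-(2*v)⁻¹ * y ^ 2))) :=
    by simpa using (integrable_pow_gauss hb 0).const_mul (m^2*(Real.sqrt (2 * π * v))⁻¹)
  have ha1 : Integrable (fun y : ℝ =>
      (2*m*(Real.sqrt (2 * π * v))⁻¹) * (y ^ 1 * Real.exp (-(2*v)⁻¹ * y ^ 2))
        + (m^2*(Real.sqrt (2 * π * v))⁻¹) * (Real.exp (-(2*v)⁻¹ * y ^ 2))) :=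
    ((integrable_pow_gauss hb 1).const_mul _).add ha0
  rw [integral_add ((integrable_pow_gauss hb 2).const_mul _) ha1,
    integral_add ((integrable_pow_gauss hb 1).const_mul _) ha0,
    integral_const_mul, integral_const_mul, integral_const_mul]
  rw [hI1, hI2]
  linear_combination (v + m^2) * hI0

lemma integral_pow4_gaussianReal (m : ℝ) {v : ℝ} (hv : 0 < v) :
    ∫ x, x ^ 4 ∂(gaussianReal m v.toNNReal) = 3*v^2 + 6*m^2*v + m^4 := by
  have hb : (0:ℝ) < (2*v)⁻¹ := by positivity
  have hI0 := gauss_norm hv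
  have hI1 := gauss_I1 hb
  have hI2 := gauss_ibp hb 0
  have h1 : ((0:ℕ) + 1 : ℝ) / (2 * (2*v)⁻¹) = v := by push_cast; field_simp; norm_num
  rw [h1] at hI2
  simp only [pow_zero, one_mul] at hI2
  have hI3 := gauss_ibp hb 1
  rw [hI1, mul_zero] at hI3
  have hI4 := gauss_ibp hb 2
  have h3 : ((2:ℕ) + 1 : ℝ) / (2 * (2*v)⁻¹) = 3 * v := by push_cast; field_simp; ring
  rw [h3] at hI4
  rw [integral_fun_gaussianReal m hv (fun x => x^4)]
  rw [show (fun y : ℝ => ((Real.sqrt (2 * π * v))⁻¹ * Real.exp (-(2 * v)⁻¹ * y ^ 2)) * (y + m)^4)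
      = fun y : ℝ => (Real.sqrt (2 * π * v))⁻¹ * (y ^ 4 * Real.exp (-(2*v)⁻¹ * y ^ 2))
        + ((4*m*(Real.sqrt (2 * π * v))⁻¹) * (y ^ 3 * Real.exp (-(2*v)⁻¹ * y ^ 2))
        + ((6*m^2*(Real.sqrt (2 * π * v))⁻¹) * (y ^ 2 * Real.exp (-(2*v)⁻¹ * y ^ 2))
        + ((4*m^3*(Real.sqrt (2 * π * v))⁻¹) * (y ^ 1 * Real.exp (-(2*v)⁻¹ * y ^ 2))
        + (m^4*(Real.sqrt (2 * π * v))⁻¹) * (Real.exp (-(2*v)⁻¹ * y ^ 2)))))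
      from funext fun y => by ring]
  have e0 : Integrable (fun y : ℝ => (m^4*(Real.sqrt (2 * π * v))⁻¹) * (Real.exp (-(2*v)⁻¹ * y ^ 2))) :=
    by simpa using (integrable_pow_gauss hb 0).const_mul (m^4*(Real.sqrt (2 * π * v))⁻¹)
  have e1 : Integrable (fun y : ℝ =>
      (4*m^3*(Real.sqrt (2 * π * v))⁻¹) * (y ^ 1 * Real.exp (-(2*v)⁻¹ * y ^ 2))
        + (m^4*(Real.sqrt (2 * π * v))⁻¹) * (Real.exp (-(2*v)⁻¹ * y ^ 2))) :=
    ((integrable_pow_gauss hb 1).const_mul _).add e0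
  have e2 : Integrable (fun y : ℝ =>
      (6*m^2*(Real.sqrt (2 * π * v))⁻¹) * (y ^ 2 * Real.exp (-(2*v)⁻¹ * y ^ 2))
        + ((4*m^3*(Real.sqrt (2 * π * v))⁻¹) * (y ^ 1 * Real.exp (-(2*v)⁻¹ * y ^ 2))
        + (m^4*(Real.sqrt (2 * π * v))⁻¹) * (Real.exp (-(2*v)⁻¹ * y ^ 2)))) :=
    ((integrable_pow_gauss hb 2).const_mul _).add e1
  have e3 : Integrable (fun y : ℝ =>
      (4*m*(Real.sqrt (2 * π * v))⁻¹) * (y ^ 3 * Real.exp (-(2*v)⁻¹ * y ^ 2))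
        + ((6*m^2*(Real.sqrt (2 * π * v))⁻¹) * (y ^ 2 * Real.exp (-(2*v)⁻¹ * y ^ 2))
        + ((4*m^3*(Real.sqrt (2 * π * v))⁻¹) * (y ^ 1 * Real.exp (-(2*v)⁻¹ * y ^ 2))
        + (m^4*(Real.sqrt (2 * π * v))⁻¹) * (Real.exp (-(2*v)⁻¹ * y ^ 2))))) :=
    ((integrable_pow_gauss hb 3).const_mul _).add e2
  rw [integral_add ((integrable_pow_gauss hb 4).const_mul _) e3,
    integral_add ((integrable_pow_gauss hb 3).const_mul _) e2,
    integral_add ((integrable_pow_gauss hb 2).const_mul _) e1,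
    integral_add ((integrable_pow_gauss hb 1).const_mul _) e0,
    integral_const_mul, integral_const_mul, integral_const_mul, integral_const_mul, integral_const_mul]
  rw [hI1, show ∫ x : ℝ, x ^ 4 * Real.exp (-(2*v)⁻¹ * x ^ 2)
      = ∫ x : ℝ, x ^ (2+2) * Real.exp (-(2*v)⁻¹ * x ^ 2) from rfl, hI4,
    show ∫ x : ℝ, x ^ 3 * Real.exp (-(2*v)⁻¹ * x ^ 2)
      = ∫ x : ℝ, x ^ (1+2) * Real.exp (-(2*v)⁻¹ * x ^ 2) from rfl, hI3, hI2]
  linear_combination (3*v^2 + 6*m^2*v + m^4) * hI0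

lemma integrable_pow_gaussianReal (m : ℝ) {v : ℝ} (hv : 0 < v) (n : ℕ) :
    Integrable (fun x => x ^ n) (gaussianReal m v.toNNReal) := by
  have hb : (0:ℝ) < (2*v)⁻¹ := by positivity
  rw [gaussianReal_of_var_ne_zero m (toNNReal_ne_zero_of_pos hv)]
  have hmeas : Measurable (fun x => (gaussianPDFReal m v.toNNReal x).toNNReal) :=
    (measurable_gaussianPDFReal m _).real_toNNReal
  have hd : gaussianPDF m v.toNNReal
      = fun x => ((gaussianPDFReal m v.toNNReal x).toNNReal : ENNReal) := rfl
  rw [hd, integrable_withDensity_iff_integrable_smul hmeas]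
  have hg : Integrable (fun y : ℝ =>
      ((Real.sqrt (2 * π * v))⁻¹ * Real.exp (-(2*v)⁻¹ * y ^ 2)) * (y + m) ^ n) := by
    have : (fun y : ℝ => ((Real.sqrt (2 * π * v))⁻¹ * Real.exp (-(2*v)⁻¹ * y ^ 2)) * (y + m) ^ n)
        = fun y : ℝ => ∑ k ∈ Finset.range (n+1),
            ((Real.sqrt (2 * π * v))⁻¹ * (m ^ (n - k) * (n.choose k : ℝ)))
              * (y ^ k * Real.exp (-(2*v)⁻¹ * y ^ 2)) := by
      funext y
      rw [add_pow, Finset.mul_sum]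
      refine Finset.sum_congr rfl fun k _ => ?_
      push_cast
      ring
    rw [this]
    exact integrable_finset_sum _ fun k _ => (integrable_pow_gauss hb k).const_mul _
  have h2 := hg.comp_sub_right m
  refine h2.congr (Filter.Eventually.of_forall fun x => ?_)
  simp only
  rw [sub_add_cancel]
  have hpdf : gaussianPDFReal m v.toNNReal x
      = (Real.sqrt (2 * π * v))⁻¹ * Real.exp (-(2*v)⁻¹ * (x - m) ^ 2) := by
    rw [show gaussianPDFReal m v.toNNReal x = gaussianPDFReal 0 v.toNNReal (x - m) by
      rw [gaussianPDFReal_sub, zero_add], pdf0_eq hv]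
  rw [NNReal.smul_def, Real.coe_toNNReal _ (gaussianPDFReal_nonneg _ _ x), hpdf]
  rw [smul_eq_mul]


lemma sum_jump {K n : ℕ} (c : Fin K → ℝ) (μ : Fin n → ℝ) (jdx : Fin K → Fin n)
    (hinj : Function.Injective jdx) (hval : ∀ k, μ (jdx k) = c k)
    (hzero : ∀ i, i ∉ Set.range jdx → μ i = 0) (g : ℝ → ℝ) (hg : g 0 = 0) :
    ∑ i, g (μ i) = ∑ k, g (c k) := by
  classical
  calc ∑ i : Fin n, g (μ i)
      = ∑ i ∈ Finset.univ.image jdx, g (μ i) := by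
        refine (Finset.sum_subset (Finset.subset_univ _) fun i _ hi => ?_).symm
        rw [hzero i (by simpa [Set.mem_range] using hi), hg]
    _ = ∑ k, g (μ (jdx k)) := Finset.sum_image fun x _ y _ h => hinj h
    _ = ∑ k, g (c k) := by simp [hval]

lemma key_step
    {Ω : Type*} [MeasurableSpace Ω] (P : Measure Ω) [IsProbabilityMeasure P]
    (T βs θs : ℝ) (hT : 0 < T) (hθs : 0 < θs)
    (K : ℕ) (c : Fin K → ℝ)
    (n : ℕ) (hn : K < n)
    (D : Fin n → Ω → ℝ) (hDmeas : ∀ i, Measurable (D i))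
    (μf : Fin n → ℝ)
    (jdx : Fin K → Fin n) (hinj : Function.Injective jdx)
    (hval : ∀ k, μf (jdx k) = c k) (hzero : ∀ i, i ∉ Set.range jdx → μf i = 0)
    (hindep : iIndepFun D P)
    (hdist : ∀ i, P.map (D i)
      = gaussianReal (βs * (T / n) + μf i) (Real.toNNReal (θs * (T / n)))) :
    MemLp (fun ω => T⁻¹ * ∑ i, (D i ω) ^ 2 - (θs + T⁻¹ * ∑ k, (c k) ^ 2)) 2 P ∧
    ∫ ω, (T⁻¹ * ∑ i, (D i ω) ^ 2 - (θs + T⁻¹ * ∑ k, (c k) ^ 2)) ^ 2 ∂P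
      = (2*θs^2 + 4*θs*(∑ k, (c k)^2)/T) * (n:ℝ)⁻¹
        + (4*θs*βs^2*T + 8*θs*βs*(∑ k, c k) + (βs^2*T + 2*βs*(∑ k, c k))^2) * ((n:ℝ)⁻¹)^2 := by
  have hn0 : (0:ℝ) < (n:ℝ) := by
    have : 0 < n := lt_of_le_of_lt (Nat.zero_le K) hn
    exact_mod_cast this
  have hΔ : 0 < T / n := by positivity
  have hv : 0 < θs * (T / n) := by positivity
  -- second moments
  have hEq2 : ∀ i, ∫ ω, (D i ω) ^ 2 ∂P
      = θs * (T / n) + (βs * (T / n) + μf i) ^ 2 := by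
    intro i
    have hasm : AEStronglyMeasurable (fun x : ℝ => x ^ 2) (P.map (D i)) :=
      (measurable_id.pow_const 2).aestronglyMeasurable
    have h1 : ∫ ω, (D i ω) ^ 2 ∂P = ∫ x, x ^ 2 ∂(P.map (D i)) :=
      (integral_map (hDmeas i).aemeasurable hasm).symm
    rw [h1, hdist i, integral_sq_gaussianReal _ hv]
  have hEq4 : ∀ i, ∫ ω, (D i ω) ^ 4 ∂P
      = 3*(θs * (T / n))^2 + 6*(βs * (T / n) + μf i)^2*(θs * (T / n))
        + (βs * (T / n) + μf i)^4 := by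
    intro i
    have hasm : AEStronglyMeasurable (fun x : ℝ => x ^ 4) (P.map (D i)) :=
      (measurable_id.pow_const 4).aestronglyMeasurable
    have h1 : ∫ ω, (D i ω) ^ 4 ∂P = ∫ x, x ^ 4 ∂(P.map (D i)) :=
      (integral_map (hDmeas i).aemeasurable hasm).symm
    rw [h1, hdist i, integral_pow4_gaussianReal _ hv]
  have hint2 : ∀ i, Integrable (fun ω => (D i ω) ^ 2) P := by
    intro i
    have h := integrable_pow_gaussianReal (βs * (T / n) + μf i) hv 2
    rw [← hdist i] at h
    exact (integrable_map_measure (measurable_id.pow_const 2).aestronglyMeasurable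
      (hDmeas i).aemeasurable).1 h
  have hint4 : ∀ i, Integrable (fun ω => (D i ω) ^ 4) P := by
    intro i
    have h := integrable_pow_gaussianReal (βs * (T / n) + μf i) hv 4
    rw [← hdist i] at h
    exact (integrable_map_measure (measurable_id.pow_const 4).aestronglyMeasurable
      (hDmeas i).aemeasurable).1 h
  have hDsq_asm : ∀ i, AEStronglyMeasurable (fun ω => (D i ω) ^ 2) P :=
    fun i => ((hDmeas i).pow_const 2).aestronglyMeasurable
  have hmem2 : ∀ i, MemLp (fun ω => (D i ω) ^ 2) 2 P := by
    intro i
    refine (memLp_two_iff_integrable_sq (hDsq_asm i)).2 ?_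
    refine (hint4 i).congr (Filter.Eventually.of_forall fun ω => ?_)
    ring
  have hvar : ∀ i, variance (fun ω => (D i ω) ^ 2) P
      = 2*(θs * (T / n))^2 + 4*(βs * (T / n) + μf i)^2*(θs * (T / n)) := by
    intro i
    rw [variance_eq_sub (hmem2 i)]
    have h4 : ∫ ω, ((fun ω => (D i ω) ^ 2) ^ 2) ω ∂P = ∫ ω, (D i ω) ^ 4 ∂P := by
      congr 1 with ω
      simp [Pi.pow_apply]
      ring
    rw [h4, hEq4 i, hEq2 i]
    ring
  -- independence of squares
  have hsqind : iIndepFun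
      (fun i => (fun x : ℝ => x ^ 2) ∘ D i) P :=
    hindep.comp _ (fun _ => measurable_id.pow_const 2)
  have hpair : Set.Pairwise ↑(Finset.univ : Finset (Fin n))
      (fun i j => IndepFun (fun ω => (D i ω) ^ 2) (fun ω => (D j ω) ^ 2) P) := by
    intro i _ j _ hij
    exact hsqind.indepFun hij
  set S : Ω → ℝ := fun ω => ∑ i, (D i ω) ^ 2 with hSdef
  have hmemS : MemLp S 2 P := by
    have := memLp_finset_sum (Finset.univ : Finset (Fin n))
      (f := fun i (ω : Ω) => (D i ω) ^ 2) (fun i _ => hmem2 i)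
    exact this
  have hSint : Integrable S P := integrable_finset_sum _ fun i _ => hint2 i
  have hS2int : Integrable (fun ω => S ω ^ 2) P :=
    (memLp_two_iff_integrable_sq hmemS.aestronglyMeasurable).1 hmemS
  have hES : ∫ ω, S ω ∂P = ∑ i, (θs * (T / n) + (βs * (T / n) + μf i) ^ 2) := by
    rw [hSdef]
    rw [integral_finset_sum _ fun i _ => hint2 i]
    exact Finset.sum_congr rfl fun i _ => hEq2 i
  have hVarS : variance S P
      = ∑ i, (2*(θs * (T / n))^2 + 4*(βs * (T / n) + μf i)^2*(θs * (T / n))) := by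
    have h := IndepFun.variance_sum (μ := P)
      (X := fun i (ω : Ω) => (D i ω) ^ 2) (s := Finset.univ)
      (fun i _ => hmem2 i) hpair
    have hfun : (∑ i : Fin n, fun (ω : Ω) => (D i ω) ^ 2) = S := by
      funext ω
      simp [hSdef]
    rw [hfun] at h
    rw [h]
    exact Finset.sum_congr rfl fun i _ => hvar i
  have hVar_def : variance S P = (∫ ω, S ω ^ 2 ∂P) - (∫ ω, S ω ∂P) ^ 2 := by
    rw [variance_eq_sub hmemS]
    rfl
  -- sums of means
  have hM : ∑ i, (βs * (T / n) + μf i) ^ 2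
      = n*(βs * (T / n))^2 + 2*(βs * (T / n))*(∑ k, c k) + ∑ k, (c k)^2 := by
    have h1 : ∑ i, (βs * (T / n) + μf i) ^ 2
        = ∑ i, ((βs * (T / n))^2 + (2*(βs * (T / n))*(μf i) + (μf i)^2)) :=
      Finset.sum_congr rfl fun i _ => by ring
    rw [h1, Finset.sum_add_distrib, Finset.sum_const, Finset.card_univ,
      Fintype.card_fin, nsmul_eq_mul,
      sum_jump c μf jdx hinj hval hzero (fun t => 2*(βs * (T / n))*t + t^2) (by norm_num),
      Finset.sum_add_distrib, ← Finset.mul_sum]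
    have : ∑ k, (c k) ^ 2 = ∑ k, ((fun t => t ^ 2) (c k)) := rfl
    ring
  -- main expansion
  set θd : ℝ := θs + T⁻¹ * ∑ k, (c k) ^ 2 with hθd
  have hmemF : MemLp (fun ω => T⁻¹ * S ω - θd) 2 P :=
    (hmemS.const_mul T⁻¹).sub (memLp_const θd)
  constructor
  · exact hmemF
  have hexp : (fun ω => (T⁻¹ * S ω - θd) ^ 2)
      = fun ω => (T⁻¹^2 * S ω ^ 2 - (2*T⁻¹*θd) * S ω) + θd^2 :=
    funext fun ω => by ring
  have hia : Integrable (fun ω => T⁻¹^2 * S ω ^ 2 - (2*T⁻¹*θd) * S ω) P :=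
    (hS2int.const_mul _).sub (hSint.const_mul _)
  calc ∫ ω, (T⁻¹ * S ω - θd) ^ 2 ∂P
      = ∫ ω, ((T⁻¹^2 * S ω ^ 2 - (2*T⁻¹*θd) * S ω) + θd^2) ∂P := by rw [hexp]
    _ = (T⁻¹^2 * ∫ ω, S ω ^ 2 ∂P) - (2*T⁻¹*θd) * ∫ ω, S ω ∂P + θd^2 := by
        rw [integral_add hia (integrable_const _),
          integral_sub (hS2int.const_mul _) (hSint.const_mul _),
          integral_const_mul, integral_const_mul, integral_const]
        simp
    _ = (2*θs^2 + 4*θs*(∑ k, (c k)^2)/T) * (n:ℝ)⁻¹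
        + (4*θs*βs^2*T + 8*θs*βs*(∑ k, c k) + (βs^2*T + 2*βs*(∑ k, c k))^2) * ((n:ℝ)⁻¹)^2 := by
        have hS2 : ∫ ω, S ω ^ 2 ∂P = variance S P + (∫ ω, S ω ∂P) ^ 2 := by
          rw [hVar_def]
          ring
        rw [hS2, hVarS, hES]
        have h2 : ∑ i, 4*(βs * (T / n) + μf i)^2*(θs * (T / n))
            = (4 * (θs * (T / n))) * ∑ i, (βs * (T / n) + μf i)^2 := by
          rw [Finset.mul_sum]
          exact Finset.sum_congr rfl fun i _ => by ring
        simp only [Finset.sum_add_distrib]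
        rw [h2, hM]
        simp only [Finset.sum_const, Finset.card_univ, Fintype.card_fin, nsmul_eq_mul]
        rw [hθd]
        field_simp
        ring

lemma eLpNorm_two_eq_integral {Ω : Type*} [MeasurableSpace Ω] (P : Measure Ω) {h : Ω → ℝ}
    (hi : Integrable (fun ω => h ω ^ 2) P) :
    eLpNorm h 2 P = ENNReal.ofReal (∫ ω, h ω ^ 2 ∂P) ^ (1/2 : ℝ) := by
  rw [eLpNorm_eq_lintegral_rpow_enorm_toReal (by norm_num) ENNReal.ofNat_ne_top]
  have htr : (2:ℝ≥0∞).toReal = (2:ℝ) := by simp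
  rw [htr, ofReal_integral_eq_lintegral_ofReal hi
    (Filter.Eventually.of_forall fun ω => sq_nonneg _)]
  congr 1
  apply lintegral_congr
  intro ω
  have h1 : ENNReal.ofReal (h ω ^ 2) = ENNReal.ofReal (‖h ω‖ ^ 2) := by
    rw [Real.norm_eq_abs, sq_abs]
  rw [h1, ENNReal.ofReal_pow (norm_nonneg _), ofReal_norm_eq_enorm]
  rw [show ((2:ℝ)) = ((2:ℕ):ℝ) by norm_num, ENNReal.rpow_natCast]


end MLEAux

/-- **Consistency of the misspecified MLE.**
`θ̂_n = T⁻¹ ∑_i D_i²` converges to `θ† = θ* + T⁻¹ [J]` in `L²` and hence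
in probability as `n → ∞`. -/
theorem mle_consistency
    {Ω : Type*} [MeasurableSpace Ω] (P : Measure Ω) [IsProbabilityMeasure P]
    (T βs θs : ℝ) (hT : 0 < T) (hθs : 0 < θs)
    (K : ℕ) (c : Fin K → ℝ) (hc : ∀ k, c k ≠ 0)
    (D : (n : ℕ) → Fin n → Ω → ℝ) (hDmeas : ∀ n i, Measurable (D n i))
    (μf : (n : ℕ) → Fin n → ℝ)
    (hjump : ∀ n, K < n → ∃ jdx : Fin K → Fin n, Function.Injective jdx ∧
      (∀ k, μf n (jdx k) = c k) ∧ ∀ i, i ∉ Set.range jdx → μf n i = 0)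
    (hindep : ∀ n, K < n → iIndepFun (D n) P)
    (hdist : ∀ n, K < n → ∀ i : Fin n,
      P.map (D n i) = gaussianReal (βs * (T / n) + μf n i) (Real.toNNReal (θs * (T / n)))) :
    Tendsto (fun n => ∫ ω, (T⁻¹ * ∑ i, (D n i ω) ^ 2
        - (θs + T⁻¹ * ∑ k, (c k) ^ 2)) ^ 2 ∂P) atTop (nhds 0) ∧
    TendstoInMeasure P (fun n ω => T⁻¹ * ∑ i, (D n i ω) ^ 2) atTop
      (fun _ => θs + T⁻¹ * ∑ k, (c k) ^ 2) := by
  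
  set θd : ℝ := θs + T⁻¹ * ∑ k, (c k) ^ 2 with hθd
  set C1 : ℝ := 2*θs^2 + 4*θs*(∑ k, (c k)^2)/T with hC1
  set C2 : ℝ := 4*θs*βs^2*T + 8*θs*βs*(∑ k, c k) + (βs^2*T + 2*βs*(∑ k, c k))^2 with hC2
  have key : ∀ n, K < n →
      MemLp (fun ω => T⁻¹ * ∑ i, (D n i ω) ^ 2 - θd) 2 P ∧
      ∫ ω, (T⁻¹ * ∑ i, (D n i ω) ^ 2 - θd) ^ 2 ∂P
        = C1 * (n:ℝ)⁻¹ + C2 * ((n:ℝ)⁻¹)^2 := by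
    intro n hn
    obtain ⟨jdx, hinj, hval, hzero⟩ := hjump n hn
    exact key_step P T βs θs hT hθs K c n hn (D n) (hDmeas n) (μf n) jdx hinj hval hzero
      (hindep n hn) (hdist n hn)
  have hlim : Tendsto (fun n : ℕ => C1 * (n:ℝ)⁻¹ + C2 * ((n:ℝ)⁻¹)^2) atTop (nhds 0) := by
    have h := tendsto_inv_atTop_nhds_zero_nat (𝕜 := ℝ)
    have h2 := (h.const_mul C1).add ((h.pow 2).const_mul C2)
    simpa using h2
  have part1 : Tendsto (fun n => ∫ ω, (T⁻¹ * ∑ i, (D n i ω) ^ 2 - θd) ^ 2 ∂P)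
      atTop (nhds 0) := by
    refine Tendsto.congr' ?_ hlim
    filter_upwards [eventually_gt_atTop K] with n hn
    exact ((key n hn).2).symm
  refine ⟨part1, ?_⟩
  have hfasm : ∀ n, AEStronglyMeasurable (fun ω => T⁻¹ * ∑ i, (D n i ω) ^ 2) P := by
    intro n
    exact ((Finset.measurable_sum Finset.univ
      (fun i _ => (hDmeas n i).pow_const 2)).const_mul T⁻¹).aestronglyMeasurable
  refine tendstoInMeasure_of_tendsto_eLpNorm (p := 2) (by norm_num) hfasm
    aestronglyMeasurable_const ?_
  have heq : ∀ n, K < n →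
      eLpNorm ((fun ω => T⁻¹ * ∑ i, (D n i ω) ^ 2) - fun _ => θd) 2 P
        = ENNReal.ofReal (∫ ω, (T⁻¹ * ∑ i, (D n i ω) ^ 2 - θd) ^ 2 ∂P) ^ (1/2 : ℝ) := by
    intro n hn
    have hsub : ((fun ω => T⁻¹ * ∑ i, (D n i ω) ^ 2) - fun _ => θd)
        = fun ω => T⁻¹ * ∑ i, (D n i ω) ^ 2 - θd := rfl
    rw [hsub]
    exact eLpNorm_two_eq_integral P
      ((memLp_two_iff_integrable_sq (key n hn).1.aestronglyMeasurable).1 (key n hn).1)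
  have h1 : Tendsto (fun n => ENNReal.ofReal
      (∫ ω, (T⁻¹ * ∑ i, (D n i ω) ^ 2 - θd) ^ 2 ∂P)) atTop (nhds 0) := by
    have := (ENNReal.continuous_ofReal.tendsto 0).comp part1
    simpa [Function.comp_def] using this
  have h2 : Tendsto (fun n => ENNReal.ofReal
      (∫ ω, (T⁻¹ * ∑ i, (D n i ω) ^ 2 - θd) ^ 2 ∂P) ^ (1/2 : ℝ)) atTop (nhds 0) := by
    have hc := (ENNReal.continuous_rpow_const (y := (1/2 : ℝ))).tendsto 0
    have := hc.comp h1
    simpa [ENNReal.zero_rpow_of_pos, Function.comp_def] using this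
  refine Tendsto.congr' ?_ h2
  filter_upwards [eventually_gt_atTop K] with n hn
  exact (heq n hn).symm
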